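/- arXiv:1810.12227 — 2 statements merged into one kernel-verified Lean document; each statement's English description precedes it below -/
import Mathlib

section
/- The homogeneous Hölder seminorm [ψ]_{γ,d} := sup_{x≠x'} |ψ(x)−ψ(x')| / d(x,x')^γ is equivalent to the anisotropic norm Σ_{i=1}^{n} sup_z ‖ψ_i(z,·)‖_{C^{γ/(2i−1)}(ℝ^d)}: there exists C = C(n,d) ≥ 1 such that C^{-1} [ψ]_{γ,d} ≤ Σ_{i=1}^{n} sup_{z∈ℝ^{nd}} ‖ψ_i(z,·)‖_{C^{γ/(2i−1)}(ℝ^d)} ≤ C [ψ]_{γ,d} for every bounded ψ : ℝ^{nd} → ℝ for which either side is finite. -/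
open scoped BigOperators ENNReal

/-- The spatial anisotropic quasi-distance `d(x,y) = ∑_i |y_i - x_i|^{1/(2i-1)}`. -/
noncomputable def quasiDist (n d : ℕ) (x y : Fin n → EuclideanSpace ℝ (Fin d)) : ℝ :=
  ∑ i : Fin n, ‖y i - x i‖ ^ ((1 : ℝ) / (2 * (i : ℕ) + 1))

/-- The homogeneous Hölder seminorm `[ψ]_{γ,d} = sup_{x ≠ x'} |ψ(x)-ψ(x')|/d(x,x')^γ`
(valued in `ℝ≥0∞` so that it is always defined). -/
noncomputable def holderSemiD (n d : ℕ) (γ : ℝ)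
    (ψ : (Fin n → EuclideanSpace ℝ (Fin d)) → ℝ) : ℝ≥0∞ :=
  ⨆ (x : Fin n → EuclideanSpace ℝ (Fin d)) (x' : Fin n → EuclideanSpace ℝ (Fin d))
    (_ : x ≠ x'), ENNReal.ofReal (|ψ x - ψ x'| / quasiDist n d x x' ^ γ)

/-- The anisotropic seminorm `∑_i sup_z ‖ψ_i(z,·)‖_{C^{γ/(2i-1)}(ℝ^d)}`, where
`ψ_i(z,x) = ψ(z₁,…,z_i + x,…,z_n)` is the perturbation of the `i`-th block variable. -/
noncomputable def anisotropicSemi (n d : ℕ) (γ : ℝ)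
    (ψ : (Fin n → EuclideanSpace ℝ (Fin d)) → ℝ) : ℝ≥0∞ :=
  ∑ i : Fin n,
    ⨆ (z : Fin n → EuclideanSpace ℝ (Fin d)) (u : EuclideanSpace ℝ (Fin d))
      (v : EuclideanSpace ℝ (Fin d)) (_ : u ≠ v),
      ENNReal.ofReal
        (|ψ (Function.update z i (z i + u)) - ψ (Function.update z i (z i + v))| /
          ‖u - v‖ ^ (γ / (2 * (i : ℕ) + 1)))

lemma quasiDist_nonneg (n d : ℕ) (x y : Fin n → EuclideanSpace ℝ (Fin d)) :
    0 ≤ quasiDist n d x y :=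
  Finset.sum_nonneg fun _ _ => Real.rpow_nonneg (norm_nonneg _) _

lemma quasiDist_pos (n d : ℕ) {x y : Fin n → EuclideanSpace ℝ (Fin d)} (h : x ≠ y) :
    0 < quasiDist n d x y := by
  obtain ⟨i, hi⟩ := Function.ne_iff.mp h
  refine Finset.sum_pos' (fun j _ => Real.rpow_nonneg (norm_nonneg _) _)
    ⟨i, Finset.mem_univ i, ?_⟩
  exact Real.rpow_pos_of_pos (norm_pos_iff.mpr (sub_ne_zero.mpr (Ne.symm hi))) _

lemma single_le_quasiDist (n d : ℕ) (x y : Fin n → EuclideanSpace ℝ (Fin d)) (i : Fin n) :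
    ‖y i - x i‖ ^ ((1 : ℝ) / (2 * (i : ℕ) + 1)) ≤ quasiDist n d x y :=
  Finset.single_le_sum (f := fun j => ‖y j - x j‖ ^ ((1 : ℝ) / (2 * (j : ℕ) + 1)))
    (fun j _ => Real.rpow_nonneg (norm_nonneg _) _) (Finset.mem_univ i)

lemma quasiDist_update (n d : ℕ) (z : Fin n → EuclideanSpace ℝ (Fin d)) (i : Fin n)
    (u v : EuclideanSpace ℝ (Fin d)) :
    quasiDist n d (Function.update z i (z i + u)) (Function.update z i (z i + v))
      = ‖u - v‖ ^ ((1 : ℝ) / (2 * (i : ℕ) + 1)) := by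
  unfold quasiDist
  rw [Finset.sum_eq_single_of_mem i (Finset.mem_univ i)]
  · rw [Function.update_self, Function.update_self, add_sub_add_left_eq_sub, norm_sub_rev]
  · intro j _ hj
    rw [Function.update_of_ne hj, Function.update_of_ne hj, sub_self, norm_zero,
      Real.zero_rpow]
    positivity

lemma rpow_one_div_rpow (t : ℝ) (ht : 0 ≤ t) (c γ : ℝ) :
    (t ^ ((1 : ℝ) / c)) ^ γ = t ^ (γ / c) := by
  rw [← Real.rpow_mul ht]
  congr 1
  ring

/-- equivalence of the homogeneous Hölder seminorm `[ψ]_{γ,d}` and the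
anisotropic norm `∑_i sup_z ‖ψ_i(z,·)‖_{C^{γ/(2i-1)}}` : there is `C = C(n,d) ≥ 1` with
`C⁻¹ [ψ]_{γ,d} ≤ ∑_i sup_z ‖ψ_i(z,·)‖ ≤ C [ψ]_{γ,d}` for every bounded `ψ`. -/
theorem holder_anisotropic_equiv (n d : ℕ) (hn : 1 ≤ n) (hd : 1 ≤ d)
    (γ : ℝ) (hγ0 : 0 < γ) (hγ1 : γ < 1) :
    ∃ C : ℝ≥0∞, 1 ≤ C ∧ C ≠ ⊤ ∧
      ∀ ψ : (Fin n → EuclideanSpace ℝ (Fin d)) → ℝ,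
        (∃ M : ℝ, ∀ x, |ψ x| ≤ M) →
        holderSemiD n d γ ψ ≤ C * anisotropicSemi n d γ ψ ∧
        anisotropicSemi n d γ ψ ≤ C * holderSemiD n d γ ψ := by
  refine ⟨(n : ℝ≥0∞), by exact_mod_cast hn, ENNReal.natCast_ne_top n, fun ψ _ => ?_⟩
  set S : Fin n → ℝ≥0∞ := fun i =>
    ⨆ (z : Fin n → EuclideanSpace ℝ (Fin d)) (u : EuclideanSpace ℝ (Fin d))
      (v : EuclideanSpace ℝ (Fin d)) (_ : u ≠ v),
      ENNReal.ofReal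
        (|ψ (Function.update z i (z i + u)) - ψ (Function.update z i (z i + v))| /
          ‖u - v‖ ^ (γ / (2 * (i : ℕ) + 1))) with hS
  have haniso : anisotropicSemi n d γ ψ = ∑ i : Fin n, S i := rfl
  constructor
  · -- holderSemiD ≤ n * anisotropic ; suffices ≤ anisotropic
    have key : holderSemiD n d γ ψ ≤ anisotropicSemi n d γ ψ := by
      refine iSup_le fun x => iSup_le fun x' => iSup_le fun hne => ?_
      set D : ℝ := quasiDist n d x x' with hD
      have hDpos : 0 < D := quasiDist_pos n d hne
      have hDγ : 0 < D ^ γ := Real.rpow_pos_of_pos hDpos γ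
      rw [ENNReal.ofReal_div_of_pos hDγ]
      refine ENNReal.div_le_of_le_mul ?_
      -- telescoping
      set g : ℕ → (Fin n → EuclideanSpace ℝ (Fin d)) :=
        fun k j => if (j : ℕ) < k then x' j else x j with hg
      have hg0 : g 0 = x := funext fun j => if_neg (Nat.not_lt_zero _)
      have hgn : g n = x' := funext fun j => if_pos j.isLt
      have hgsucc : ∀ i : Fin n, g ((i : ℕ) + 1) = Function.update (g i) i (x' i) := by
        intro i
        funext j
        rw [Function.update_apply]
        by_cases hj : j = i
        · subst hj; simp [hg]
        · have hv : (j : ℕ) ≠ (i : ℕ) := fun h => hj (Fin.ext h)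
          rw [if_neg hj]
          show (if (j : ℕ) < (i : ℕ) + 1 then x' j else x j)
            = (if (j : ℕ) < (i : ℕ) then x' j else x j)
          have hiff : ((j : ℕ) < (i : ℕ) + 1) ↔ ((j : ℕ) < (i : ℕ)) := by omega
          exact if_congr hiff rfl rfl
      have hgii : ∀ i : Fin n, g i i = x i := by
        intro i; simp [hg]
      have htel : ψ x' - ψ x = ∑ i : Fin n, (ψ (g ((i : ℕ) + 1)) - ψ (g (i : ℕ))) := by
        rw [Fin.sum_univ_eq_sum_range (fun k => ψ (g (k + 1)) - ψ (g k)) n,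
          Finset.sum_range_sub (fun k => ψ (g k)) n, hg0, hgn]
      have habs : |ψ x - ψ x'| ≤ ∑ i : Fin n, |ψ (g ((i : ℕ) + 1)) - ψ (g (i : ℕ))| := by
        rw [abs_sub_comm, htel]
        exact Finset.abs_sum_le_sum_abs _ _
      calc ENNReal.ofReal |ψ x - ψ x'|
          ≤ ENNReal.ofReal (∑ i : Fin n, |ψ (g ((i : ℕ) + 1)) - ψ (g (i : ℕ))|) :=
            ENNReal.ofReal_le_ofReal habs
        _ = ∑ i : Fin n, ENNReal.ofReal (|ψ (g ((i : ℕ) + 1)) - ψ (g (i : ℕ))|) :=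
            ENNReal.ofReal_sum_of_nonneg (fun i _ => abs_nonneg _)
        _ ≤ ∑ i : Fin n, S i * ENNReal.ofReal (D ^ γ) := by
            refine Finset.sum_le_sum fun i _ => ?_
            by_cases hxi : x i = x' i
            · have : g ((i : ℕ) + 1) = g (i : ℕ) := by
                rw [hgsucc i, ← hxi, ← hgii i, Function.update_eq_self]
              simp [this]
            · set z : Fin n → EuclideanSpace ℝ (Fin d) := Function.update (g (i : ℕ)) i 0
                with hz
              have hzu : Function.update z i (z i + x i) = g (i : ℕ) := by
                rw [hz, Function.update_self, zero_add, Function.update_idem,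
                  ← hgii i, Function.update_eq_self]
              have hzv : Function.update z i (z i + x' i) = g ((i : ℕ) + 1) := by
                rw [hz, Function.update_self, zero_add, Function.update_idem, hgsucc i]
              set r : ℝ := ‖x i - x' i‖ ^ (γ / (2 * (i : ℕ) + 1)) with hr
              have hrpos : 0 < r :=
                Real.rpow_pos_of_pos (norm_pos_iff.mpr (sub_ne_zero.mpr hxi)) _
              have hterm : ENNReal.ofReal
                  (|ψ (Function.update z i (z i + x i)) -
                    ψ (Function.update z i (z i + x' i))| / r) ≤ S i := by
                rw [hS]
                refine le_iSup_of_le z (le_iSup_of_le (x i) (le_iSup_of_le (x' i)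
                  (le_iSup_of_le hxi le_rfl)))
              have hrD : r ≤ D ^ γ := by
                rw [hr, ← rpow_one_div_rpow _ (norm_nonneg _)]
                refine Real.rpow_le_rpow (Real.rpow_nonneg (norm_nonneg _) _) ?_ hγ0.le
                rw [norm_sub_rev]
                exact single_le_quasiDist n d x x' i
              calc ENNReal.ofReal (|ψ (g ((i : ℕ) + 1)) - ψ (g (i : ℕ))|)
                  = ENNReal.ofReal
                    (|ψ (Function.update z i (z i + x i)) -
                      ψ (Function.update z i (z i + x' i))| / r * r) := by
                    rw [div_mul_cancel₀ _ hrpos.ne', hzu, hzv, abs_sub_comm]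
                _ = ENNReal.ofReal
                    (|ψ (Function.update z i (z i + x i)) -
                      ψ (Function.update z i (z i + x' i))| / r) * ENNReal.ofReal r := by
                    rw [ENNReal.ofReal_mul (by positivity)]
                _ ≤ S i * ENNReal.ofReal (D ^ γ) :=
                    mul_le_mul' hterm (ENNReal.ofReal_le_ofReal hrD)
        _ = anisotropicSemi n d γ ψ * ENNReal.ofReal (D ^ γ) := by
            rw [haniso, Finset.sum_mul]
    calc holderSemiD n d γ ψ ≤ anisotropicSemi n d γ ψ := key
      _ = 1 * anisotropicSemi n d γ ψ := (one_mul _).symm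
      _ ≤ (n : ℝ≥0∞) * anisotropicSemi n d γ ψ :=
          mul_le_mul_left (by exact_mod_cast hn) _
  · -- anisotropic ≤ n * holder
    have hSle : ∀ i : Fin n, S i ≤ holderSemiD n d γ ψ := by
      intro i
      refine iSup_le fun z => iSup_le fun u => iSup_le fun v => iSup_le fun huv => ?_
      set X := Function.update z i (z i + u) with hX
      set X' := Function.update z i (z i + v) with hX'
      have hXX' : X ≠ X' := by
        intro h
        apply huv
        have := congrFun h i
        rw [hX, hX', Function.update_self, Function.update_self] at this
        exact add_left_cancel this
      have hq : quasiDist n d X X' ^ γ = ‖u - v‖ ^ (γ / (2 * (i : ℕ) + 1)) := by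
        rw [hX, hX', quasiDist_update, rpow_one_div_rpow _ (norm_nonneg _)]
      rw [← hq]
      exact le_iSup_of_le X (le_iSup_of_le X' (le_iSup_of_le hXX' le_rfl))
    calc anisotropicSemi n d γ ψ = ∑ i : Fin n, S i := haniso
      _ ≤ ∑ _i : Fin n, holderSemiD n d γ ψ := Finset.sum_le_sum fun i _ => hSle i
      _ = (n : ℝ≥0∞) * holderSemiD n d γ ψ := by
          rw [Finset.sum_const, Finset.card_univ, Fintype.card_fin, nsmul_eq_mul]
end

section
/- Resolvent scaling bound: the resolvent R̃^{(τ,ξ)}(s,t) of the frozen linear system can be written as T_{s−t} R̂^{(τ,ξ),s,t}(1,0) T_{s−t}^{-1} where R̂^{(τ,ξ),s,t}(1,0) is the resolvent at time 1 of the rescaled system, and there exists Ĉ₁ (independent of s, t, ξ, τ) such that |R̂^{(τ,ξ),s,t}(1,0)* ζ| ≤ Ĉ₁ |ζ| for all ζ ∈ ℝ^{nd}; consequently |[R̃^{(τ,ξ)}(s,t)]_{i,j}| ≤ Ĉ₁ (s−t)^{i−j} for all block indices i, j. -/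
open scoped BigOperators

private lemma aux_block {n d : ℕ} {t s L : ℝ} (hts : t ≤ s) (hL : 0 ≤ L)
    {M R : ℝ → Matrix (Fin n × Fin d) (Fin n × Fin d) ℝ}
    (hM1 : ∀ v (p q : Fin n × Fin d), M v p q ≠ 0 → (p.1 : ℕ) = (q.1 : ℕ) + 1)
    (hM2 : ∀ v (p q : Fin n × Fin d), |M v p q| ≤ L)
    (hR0 : R t = 1)
    (hR : ∀ v ∈ Set.Icc t s, ∀ p q : Fin n × Fin d,
          HasDerivAt (fun u => R u p q) ((M v * R v) p q) v) :
    ∀ m : ℕ, ∀ p q : Fin n × Fin d, (p.1 : ℕ) = m → ∀ v ∈ Set.Icc t s,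
      ((m < (q.1 : ℕ) → R v p q = 0) ∧
       ((q.1 : ℕ) ≤ m → |R v p q| ≤ (((n : ℝ) * d) * L) ^ (m - (q.1 : ℕ))
          * (v - t) ^ (m - (q.1 : ℕ)))) := by
  set c : ℝ := ((n : ℝ) * d) * L with hc_def
  have hc : 0 ≤ c := by positivity
  have hcont : ∀ p q : Fin n × Fin d,
      ContinuousOn (fun u => R u p q) (Set.Icc t s) :=
    fun p q x hx => ((hR x hx p q).continuousAt).continuousWithinAt
  intro m
  induction m using Nat.strong_induction_on with
  | _ m IH =>
    intro p q hpm v hv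
    have hA0 : m ≤ (q.1 : ℕ) → R v p q = R t p q := by
      intro hmj
      have hz : ∀ x ∈ Set.Ico t s,
          HasDerivWithinAt (fun u => R u p q) 0 (Set.Ici x) x := by
        intro x hx
        have hx' : x ∈ Set.Icc t s := ⟨hx.1, le_of_lt hx.2⟩
        have h0 : (M x * R x) p q = 0 := by
          rw [Matrix.mul_apply]
          refine Finset.sum_eq_zero fun p' _ => ?_
          by_cases hM : M x p p' = 0
          · rw [hM, zero_mul]
          · have h1 := hM1 x p p' hM
            have hlt : (p'.1 : ℕ) < m := by omega
            have hz' := (IH (p'.1 : ℕ) hlt p' q rfl x hx').1 (by omega)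
            rw [hz', mul_zero]
        have hd := hR x hx' p q
        rw [h0] at hd
        exact hd.hasDerivWithinAt
      exact constant_of_has_deriv_right_zero (hcont p q) hz v hv
    constructor
    · intro hmj
      have hne : p ≠ q := by
        rintro rfl; omega
      rw [hA0 hmj.le, hR0]
      exact Matrix.one_apply_ne hne
    · intro hjm
      rcases eq_or_lt_of_le hjm with heq | hlt
      · rw [hA0 (by omega), hR0]
        have hk0 : m - (q.1 : ℕ) = 0 := by omega
        rw [hk0, pow_zero, pow_zero, mul_one]
        by_cases hpq : p = q
        · rw [hpq, Matrix.one_apply_eq]; norm_num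
        · rw [Matrix.one_apply_ne hpq]; norm_num
      · obtain ⟨K, hK⟩ : ∃ K, m - (q.1 : ℕ) = K + 1 := ⟨m - (q.1 : ℕ) - 1, by omega⟩
        have hne : p ≠ q := by rintro rfl; omega
        have hfa : ‖R t p q‖ ≤ c ^ (K + 1) * (t - t) ^ (K + 1) := by
          rw [hR0, Real.norm_eq_abs, Matrix.one_apply_ne hne, abs_zero, sub_self,
            zero_pow (Nat.succ_ne_zero K), mul_zero]
        have hB : ∀ x : ℝ, HasDerivAt (fun u => c ^ (K + 1) * (u - t) ^ (K + 1))
            (c ^ (K + 1) * (((K : ℝ) + 1) * (x - t) ^ K)) x := by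
          intro x
          have h := (((hasDerivAt_id x).sub_const t).pow (K + 1)).const_mul (c ^ (K + 1))
          simpa [mul_comm, mul_assoc, mul_left_comm] using h
        have hbound : ∀ x ∈ Set.Ico t s,
            ‖(M x * R x) p q‖ ≤ c ^ (K + 1) * (((K : ℝ) + 1) * (x - t) ^ K) := by
          intro x hx
          have hx' : x ∈ Set.Icc t s := ⟨hx.1, hx.2.le⟩
          have hxt : (0 : ℝ) ≤ x - t := sub_nonneg.2 hx.1
          rw [Real.norm_eq_abs, Matrix.mul_apply]
          have hterm : ∀ p' : Fin n × Fin d,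
              |M x p p' * R x p' q| ≤ L * (c ^ K * (x - t) ^ K) := by
            intro p'
            rw [abs_mul]
            by_cases hM : M x p p' = 0
            · rw [hM, abs_zero, zero_mul]
              exact mul_nonneg hL (mul_nonneg (pow_nonneg hc K) (pow_nonneg hxt K))
            · have h1 := hM1 x p p' hM
              have hp'm : (p'.1 : ℕ) = m - 1 := by omega
              have hIH := (IH (m - 1) (by omega) p' q hp'm x hx').2 (by omega)
              have hKK : (m - 1) - (q.1 : ℕ) = K := by omega
              rw [hKK] at hIH
              exact mul_le_mul (hM2 x p p') hIH (abs_nonneg _) hL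
          calc |∑ p', M x p p' * R x p' q| ≤ ∑ p', |M x p p' * R x p' q| :=
                Finset.abs_sum_le_sum_abs _ _
            _ ≤ ∑ _p' : Fin n × Fin d, L * (c ^ K * (x - t) ^ K) :=
                Finset.sum_le_sum fun p' _ => hterm p'
            _ = ((n * d : ℕ) : ℝ) * (L * (c ^ K * (x - t) ^ K)) := by
                rw [Finset.sum_const, Finset.card_univ, nsmul_eq_mul]
                simp [Fintype.card_prod]
            _ = c ^ (K + 1) * (x - t) ^ K := by
                push_cast
                rw [pow_succ]
                ring
            _ ≤ c ^ (K + 1) * (((K : ℝ) + 1) * (x - t) ^ K) := by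
                nlinarith [mul_nonneg (pow_nonneg hc (K + 1)) (pow_nonneg hxt K),
                  Nat.cast_nonneg (α := ℝ) K]
        have hmvt := image_norm_le_of_norm_deriv_right_le_deriv_boundary
          (hcont p q)
          (fun x hx => (hR x ⟨hx.1, hx.2.le⟩ p q).hasDerivWithinAt)
          hfa hB hbound hv
        rw [hK]
        simpa [Real.norm_eq_abs] using hmvt


/-- resolvent scaling bound.  For the resolvent `R̃(s,t)` of a linear system
whose generator `M(v)` is strictly lower block-subdiagonal (only blocks `(i,i-1)` may be
nonzero) with entries uniformly bounded by `L`, writing `R̃(s,t) = T_{s-t} R̂ T_{s-t}⁻¹`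
with `R̂ = T_{s-t}⁻¹ R̃(s,t) T_{s-t}` the resolvent at time `1` of the rescaled system,
there exists `Ĉ₁` (independent of `s, t` and of the generator) such that
`|R̂* ζ| ≤ Ĉ₁ |ζ|` for all `ζ ∈ ℝ^{nd}`; consequently
`|[R̃(s,t)]_{i,j}| ≤ Ĉ₁ (s-t)^{i-j}` for all block indices `i, j`.
(Here `(T_u)_{(i,j),(i,j)} = u^{i+1}` in Lean indexing, the paper block index being
`i+1`.) -/
theorem resolvent_scaling_bound (n d : ℕ) (hn : 1 ≤ n) (hd : 1 ≤ d)
    (T L : ℝ) (hT : 0 < T) (hL : 0 < L) :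
    ∃ C : ℝ, 0 < C ∧
      ∀ t s : ℝ, 0 ≤ t → t ≤ s → s ≤ T →
      ∀ M : ℝ → Matrix (Fin n × Fin d) (Fin n × Fin d) ℝ,
        (∀ v (p q : Fin n × Fin d), M v p q ≠ 0 → (p.1 : ℕ) = (q.1 : ℕ) + 1) →
        (∀ v (p q : Fin n × Fin d), |M v p q| ≤ L) →
      ∀ R : ℝ → Matrix (Fin n × Fin d) (Fin n × Fin d) ℝ,
        R t = 1 →
        (∀ v ∈ Set.Icc t s, ∀ p q : Fin n × Fin d,
          HasDerivAt (fun u => R u p q) ((M v * R v) p q) v) →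
        -- uniform bound for (the adjoint of) the rescaled resolvent
        -- `R̂ = T_{s-t}⁻¹ R̃(s,t) T_{s-t}`
        (t < s → ∀ ζ : (Fin n × Fin d) → ℝ,
          Real.sqrt (∑ q : Fin n × Fin d,
              (∑ p : Fin n × Fin d,
                (s - t) ^ (-(((p.1 : ℕ) : ℝ) + 1)) * R s p q
                  * (s - t) ^ (((q.1 : ℕ) : ℝ) + 1) * ζ p) ^ 2)
            ≤ C * Real.sqrt (∑ p : Fin n × Fin d, ζ p ^ 2)) ∧
        -- blockwise bound on the resolvent itself
        (∀ p q : Fin n × Fin d,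
          |R s p q| ≤ C * (s - t) ^ (((p.1 : ℕ) : ℝ) - ((q.1 : ℕ) : ℝ))) := by
  set c : ℝ := ((n : ℝ) * d) * L with hc_def
  have hc : 0 ≤ c := by positivity
  set Cb : ℝ := (1 + c) ^ n with hCb_def
  have hCb : 0 < Cb := by positivity
  have hN : (1 : ℝ) ≤ (n : ℝ) * d := by
    have h1 : (1 : ℝ) ≤ (n : ℝ) := by exact_mod_cast hn
    have h2 : (1 : ℝ) ≤ (d : ℝ) := by exact_mod_cast hd
    nlinarith
  refine ⟨((n : ℝ) * d) * Cb, by positivity, ?_⟩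
  intro t s ht hts hsT M hM1 hM2 R hR0 hR
  have hCbC : Cb ≤ ((n : ℝ) * d) * Cb := by nlinarith
  have haux := aux_block hts hL.le hM1 hM2 hR0 hR
  have hblock : ∀ p q : Fin n × Fin d,
      |R s p q| ≤ Cb * (s - t) ^ (((p.1 : ℕ) : ℝ) - ((q.1 : ℕ) : ℝ)) := by
    intro p q
    have hx := haux (p.1 : ℕ) p q rfl s (Set.right_mem_Icc.2 hts)
    rcases lt_or_ge ((p.1 : ℕ)) ((q.1 : ℕ)) with h | h
    · rw [hx.1 h, abs_zero]
      exact mul_nonneg hCb.le (Real.rpow_nonneg (sub_nonneg.2 hts) _)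
    · have hb := hx.2 h
      have hcast : ((p.1 : ℕ) : ℝ) - ((q.1 : ℕ) : ℝ)
          = (((p.1 : ℕ) - (q.1 : ℕ) : ℕ) : ℝ) := by
        rw [Nat.cast_sub h]
      rw [hcast, Real.rpow_natCast]
      refine hb.trans ?_
      have hk : (p.1 : ℕ) - (q.1 : ℕ) ≤ n := le_trans (Nat.sub_le _ _) p.1.isLt.le
      have h1 : c ^ ((p.1 : ℕ) - (q.1 : ℕ)) ≤ (1 + c) ^ n :=
        le_trans (pow_le_pow_left₀ hc (by linarith) _) (pow_le_pow_right₀ (by linarith) hk)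
      exact mul_le_mul_of_nonneg_right h1 (pow_nonneg (sub_nonneg.2 hts) _)
  constructor
  · -- scaled bound
    intro hts' ζ
    set u : ℝ := s - t with hu_def
    have hu : 0 < u := sub_pos.2 hts'
    have hent : ∀ p q : Fin n × Fin d,
        |u ^ (-(((p.1 : ℕ) : ℝ) + 1)) * R s p q * u ^ (((q.1 : ℕ) : ℝ) + 1)| ≤ Cb := by
      intro p q
      have h1 := hblock p q
      rw [abs_mul, abs_mul, abs_of_pos (Real.rpow_pos_of_pos hu _),
        abs_of_pos (Real.rpow_pos_of_pos hu _)]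
      have key : u ^ (-(((p.1 : ℕ) : ℝ) + 1)) * u ^ ((((p.1 : ℕ) : ℝ) - ((q.1 : ℕ) : ℝ)))
          * u ^ (((q.1 : ℕ) : ℝ) + 1) = 1 := by
        rw [← Real.rpow_add hu, ← Real.rpow_add hu,
          show -(((p.1 : ℕ) : ℝ) + 1) + ((((p.1 : ℕ) : ℝ) - ((q.1 : ℕ) : ℝ)))
            + (((q.1 : ℕ) : ℝ) + 1) = (0:ℝ) from by ring, Real.rpow_zero]
      calc u ^ (-(((p.1 : ℕ) : ℝ) + 1)) * |R s p q| * u ^ (((q.1 : ℕ) : ℝ) + 1)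
          ≤ u ^ (-(((p.1 : ℕ) : ℝ) + 1))
              * (Cb * u ^ (((p.1 : ℕ) : ℝ) - ((q.1 : ℕ) : ℝ)))
              * u ^ (((q.1 : ℕ) : ℝ) + 1) := by
            exact mul_le_mul_of_nonneg_right
              (mul_le_mul_of_nonneg_left h1 (Real.rpow_pos_of_pos hu _).le)
              (Real.rpow_pos_of_pos hu _).le
        _ = Cb * (u ^ (-(((p.1 : ℕ) : ℝ) + 1)) * u ^ ((((p.1 : ℕ) : ℝ) - ((q.1 : ℕ) : ℝ)))
              * u ^ (((q.1 : ℕ) : ℝ) + 1)) := by ring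
        _ = Cb := by rw [key, mul_one]
    have hinner : ∀ q : Fin n × Fin d,
        |∑ p : Fin n × Fin d,
            u ^ (-(((p.1 : ℕ) : ℝ) + 1)) * R s p q * u ^ (((q.1 : ℕ) : ℝ) + 1) * ζ p|
          ≤ Cb * ∑ p : Fin n × Fin d, |ζ p| := by
      intro q
      calc |∑ p : Fin n × Fin d,
            u ^ (-(((p.1 : ℕ) : ℝ) + 1)) * R s p q * u ^ (((q.1 : ℕ) : ℝ) + 1) * ζ p|
          ≤ ∑ p : Fin n × Fin d,
            |u ^ (-(((p.1 : ℕ) : ℝ) + 1)) * R s p q * u ^ (((q.1 : ℕ) : ℝ) + 1) * ζ p| :=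
            Finset.abs_sum_le_sum_abs _ _
        _ ≤ ∑ p : Fin n × Fin d, Cb * |ζ p| := by
            refine Finset.sum_le_sum fun p _ => ?_
            rw [abs_mul]
            exact mul_le_mul_of_nonneg_right (hent p q) (abs_nonneg _)
        _ = Cb * ∑ p : Fin n × Fin d, |ζ p| := by rw [Finset.mul_sum]
    set S : ℝ := ∑ p : Fin n × Fin d, ζ p ^ 2 with hS_def
    have hCS : (∑ p : Fin n × Fin d, |ζ p|) ^ 2 ≤ ((n : ℝ) * d) * S := by
      have h := Finset.sum_mul_sq_le_sq_mul_sq Finset.univ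
        (fun _ : Fin n × Fin d => (1 : ℝ)) (fun p => |ζ p|)
      simpa [sq_abs, Finset.card_univ, Fintype.card_prod, mul_comm] using h
    have hsum : (∑ q : Fin n × Fin d,
        (∑ p : Fin n × Fin d,
          u ^ (-(((p.1 : ℕ) : ℝ) + 1)) * R s p q * u ^ (((q.1 : ℕ) : ℝ) + 1) * ζ p) ^ 2)
        ≤ (((n : ℝ) * d) * Cb) ^ 2 * S := by
      have h1 : ∀ q : Fin n × Fin d,
          (∑ p : Fin n × Fin d,
            u ^ (-(((p.1 : ℕ) : ℝ) + 1)) * R s p q * u ^ (((q.1 : ℕ) : ℝ) + 1) * ζ p) ^ 2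
          ≤ Cb ^ 2 * (((n : ℝ) * d) * S) := by
        intro q
        calc (∑ p : Fin n × Fin d,
            u ^ (-(((p.1 : ℕ) : ℝ) + 1)) * R s p q * u ^ (((q.1 : ℕ) : ℝ) + 1) * ζ p) ^ 2
            = |∑ p : Fin n × Fin d,
              u ^ (-(((p.1 : ℕ) : ℝ) + 1)) * R s p q * u ^ (((q.1 : ℕ) : ℝ) + 1) * ζ p| ^ 2 :=
              (sq_abs _).symm
          _ ≤ (Cb * ∑ p : Fin n × Fin d, |ζ p|) ^ 2 :=
              pow_le_pow_left₀ (abs_nonneg _) (hinner q) 2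
          _ = Cb ^ 2 * (∑ p : Fin n × Fin d, |ζ p|) ^ 2 := by ring
          _ ≤ Cb ^ 2 * (((n : ℝ) * d) * S) :=
              mul_le_mul_of_nonneg_left hCS (sq_nonneg _)
      calc (∑ q : Fin n × Fin d,
          (∑ p : Fin n × Fin d,
            u ^ (-(((p.1 : ℕ) : ℝ) + 1)) * R s p q * u ^ (((q.1 : ℕ) : ℝ) + 1) * ζ p) ^ 2)
          ≤ ∑ _q : Fin n × Fin d, Cb ^ 2 * (((n : ℝ) * d) * S) :=
            Finset.sum_le_sum fun q _ => h1 q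
        _ = ((n * d : ℕ) : ℝ) * (Cb ^ 2 * (((n : ℝ) * d) * S)) := by
            rw [Finset.sum_const, Finset.card_univ, nsmul_eq_mul]
            simp [Fintype.card_prod]
        _ = (((n : ℝ) * d) * Cb) ^ 2 * S := by push_cast; ring
    calc Real.sqrt (∑ q : Fin n × Fin d,
          (∑ p : Fin n × Fin d,
            u ^ (-(((p.1 : ℕ) : ℝ) + 1)) * R s p q * u ^ (((q.1 : ℕ) : ℝ) + 1) * ζ p) ^ 2)
        ≤ Real.sqrt ((((n : ℝ) * d) * Cb) ^ 2 * S) := Real.sqrt_le_sqrt hsum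
      _ = ((n : ℝ) * d) * Cb * Real.sqrt S := by
          rw [Real.sqrt_mul (sq_nonneg _), Real.sqrt_sq (by positivity)]
  · intro p q
    exact (hblock p q).trans (mul_le_mul_of_nonneg_right hCbC
      (Real.rpow_nonneg (sub_nonneg.2 hts) _))
end
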